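/- Let D be an odd squarefree integer with D ≥ 5, and let x, y be odd positive integers with x² − D·y² = 4 and D ∣ x − 2. Then there exist odd positive integers u, v with x + 2 = u², x − 2 = D·v², u² − D·v² = 4, and u < x. -/

import Mathlib

theorem stmt2 (D : ℤ) (hDodd : Odd D) (hsf : Squarefree D) (hD5 : 5 ≤ D)
    (x y : ℤ) (hx : Odd x) (hxpos : 0 < x) (hy : Odd y) (hypos : 0 < y)
    (hpell : x ^ 2 - D * y ^ 2 = 4) (hdvd : D ∣ x - 2) :
    ∃ u v : ℤ, Odd u ∧ 0 < u ∧ Odd v ∧ 0 < v ∧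
      x + 2 = u ^ 2 ∧ x - 2 = D * v ^ 2 ∧ u ^ 2 - D * v ^ 2 = 4 ∧ u < x := by
  obtain ⟨k, hk⟩ := hdvd
  have hy1 : 1 ≤ y := hypos
  have hx3 : 3 ≤ x := by
    by_contra h
    push_neg at h
    have hx1 : x = 1 ∨ x = 2 := by omega
    rcases hx1 with h1 | h1 <;> nlinarith
  have hgo : Odd (x - 2) := by
    rcases hx with ⟨m, hm⟩; exact ⟨m - 1, by omega⟩
  have hcop : IsCoprime (x - 2) (x + 2) := by
    rw [Int.isCoprime_iff_gcd_eq_one]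
    set g := Int.gcd (x - 2) (x + 2) with hg
    have hl : (g : ℤ) ∣ x - 2 := Int.gcd_dvd_left (x - 2) (x + 2)
    have hr : (g : ℤ) ∣ x + 2 := Int.gcd_dvd_right (x - 2) (x + 2)
    have h1 : (g : ℤ) ∣ 4 := by
      have := dvd_sub hr hl
      simpa using this
    have h3 : ¬ (2 : ℤ) ∣ (g : ℤ) := by
      intro h2g
      have : (2 : ℤ) ∣ x - 2 := h2g.trans hl
      rw [Int.odd_iff] at hgo
      omega
    have h4 : g ∣ 4 := by exact_mod_cast h1
    have h5 : g ≤ 4 := Nat.le_of_dvd (by norm_num) h4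
    interval_cases g <;> first | rfl | (exfalso; revert h4 h3; norm_num)
  have hkd : k ∣ x - 2 := Dvd.intro_left D hk.symm
  have hkcop : IsCoprime k (x + 2) := hcop.of_isCoprime_of_dvd_left hkd
  have hD0 : D ≠ 0 := by linarith
  have hprod : k * (x + 2) = y ^ 2 := by
    have h : D * (k * (x + 2)) = D * y ^ 2 := by linear_combination hpell - (x + 2) * hk
    exact mul_left_cancel₀ hD0 h
  obtain ⟨u0, hu0⟩ := Int.sq_of_isCoprime (hcop.symm.of_isCoprime_of_dvd_right hkd)
    (by rw [mul_comm]; exact hprod : (x + 2) * k = y ^ 2)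
  obtain ⟨v0, hv0⟩ := Int.sq_of_isCoprime hkcop hprod
  have hxp2 : x + 2 = u0 ^ 2 := by
    rcases hu0 with h | h
    · exact h
    · nlinarith [sq_nonneg u0]
  have hkpos : 0 < k := by nlinarith [sq_nonneg y, hprod]
  have hkv : k = v0 ^ 2 := by
    rcases hv0 with h | h
    · exact h
    · nlinarith [sq_nonneg v0]
  have hu0odd : Odd u0 := by
    have h2 : Odd (u0 ^ 2) := by
      rw [← hxp2]; rcases hx with ⟨m, hm⟩; exact ⟨m + 1, by omega⟩
    rcases Int.even_or_odd u0 with he | ho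
    · exact absurd (Int.even_pow.mpr ⟨he, two_ne_zero⟩) (Int.not_even_iff_odd.mpr h2)
    · exact ho
  have hv0odd : Odd v0 := by
    have h2 : Odd (v0 ^ 2) := by
      rcases Int.even_or_odd (v0 ^ 2) with he | ho
      · exfalso
        have : Even (D * v0 ^ 2) := he.mul_left D
        rw [← hkv, ← hk] at this
        exact (Int.not_even_iff_odd.mpr hgo) this
      · exact ho
    rcases Int.even_or_odd v0 with he | ho
    · exact absurd (Int.even_pow.mpr ⟨he, two_ne_zero⟩) (Int.not_even_iff_odd.mpr h2)
    · exact ho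
  refine ⟨|u0|, |v0|, ?_, ?_, ?_, ?_, ?_, ?_, ?_, ?_⟩
  · exact odd_abs.mpr hu0odd
  · rw [abs_pos]; intro h; rw [h] at hxp2; simp at hxp2; omega
  · exact odd_abs.mpr hv0odd
  · rw [abs_pos]; intro h; rw [h] at hkv; simp at hkv; omega
  · rw [sq_abs]; exact hxp2
  · rw [sq_abs, ← hkv]; exact hk
  · rw [sq_abs, sq_abs, ← hxp2, ← hkv, ← hk]; ring
  · have h1 : |u0| ^ 2 < x ^ 2 := by rw [sq_abs, ← hxp2]; nlinarith
    nlinarith [abs_nonneg u0]
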